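/- Let H be an atomic commutative monoid whose associated reduced monoid is finitely generated. Then the (strong) successive distance δ(H) is finite. -/

import Mathlib

/-- `s` is a factorization of `a`: a multiset of atoms of the reduced monoid
`H_red = Associates H` whose product is the class of `a`. -/
def IsFactorizationOf {H : Type*} [CommMonoid H]
    (s : Multiset (Associates H)) (a : H) : Prop :=
  (∀ x ∈ s, Irreducible x) ∧ s.prod = Associates.mk a

/-- The set of lengths `L(a)` of `a`. -/
def Lengths {H : Type*} [CommMonoid H] (a : H) : Set ℕ :=
  {n | ∃ s : Multiset (Associates H), IsFactorizationOf s a ∧ s.card = n}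

/-- The distance between two factorizations:
`d(z,z') = max {|z ⬝ gcd(z,z')⁻¹|, |z' ⬝ gcd(z,z')⁻¹|}`. -/
def factorizationDist {H : Type*} [CommMonoid H] [DecidableEq (Associates H)]
    (s t : Multiset (Associates H)) : ℕ :=
  max (s - t).card (t - s).card

/-- `k` and `l` are adjacent lengths of `a`:
`L(a) ∩ [min {k,l}, max {k,l}] = {k, l}` with `k ≠ l`. -/
def AdjacentLengths {H : Type*} [CommMonoid H] (a : H) (k l : ℕ) : Prop :=
  k ≠ l ∧ k ∈ Lengths a ∧ l ∈ Lengths a ∧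
    ∀ m ∈ Lengths a, min k l ≤ m → m ≤ max k l → m = k ∨ m = l

lemma factorizationDist_add_right {H : Type*} [CommMonoid H] [DecidableEq (Associates H)]
    (z y u : Multiset (Associates H)) :
    factorizationDist (z + u) (y + u) = factorizationDist z y := by
  have h1 : ∀ s t : Multiset (Associates H), s + u - (t + u) = s - t := by
    intro s t
    ext a
    simp only [Multiset.count_sub, Multiset.count_add]
    omega
  simp only [factorizationDist, h1]

/-- If `H` is an atomic commutative unit-cancellative monoid whose associated reduced
monoid `H_red = Associates H` is finitely generated, then the (strong) successive
distance `δ(H)` is finite: there is `N` such that every factorization `z` of an element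
can reach each length adjacent to `|z|` within distance `N`. -/
theorem successiveDistance_finite_of_finitelyGenerated {H : Type*} [CommMonoid H]
    [DecidableEq (Associates H)]
    (hUC : ∀ a u : H, a * u = a → IsUnit u)
    (hAtomic : ∀ a : H, ¬ IsUnit a →
      ∃ s : Multiset (Associates H), IsFactorizationOf s a)
    (hfg : ∃ S : Finset (Associates H),
      Submonoid.closure (S : Set (Associates H)) = ⊤) :
    ∃ N : ℕ, ∀ (a : H) (z : Multiset (Associates H)), IsFactorizationOf z a →
      ∀ k : ℕ, AdjacentLengths a k z.card →
        ∃ y : Multiset (Associates H), IsFactorizationOf y a ∧ y.card = k ∧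
          factorizationDist z y ≤ N := by
  classical
  obtain ⟨S, hS⟩ := hfg
  -- every irreducible element of `Associates H` belongs to `S`
  have hirr : ∀ x : Associates H, Irreducible x → x ∈ S := by
    intro x hx
    have hmem : x ∈ Submonoid.closure (S : Set (Associates H)) := by
      rw [hS]; exact Submonoid.mem_top x
    revert hx
    induction hmem using Submonoid.closure_induction with
    | mem y hy => exact fun _ => hy
    | one => exact fun h => absurd isUnit_one h.not_isUnit
    | mul y z hy hz ihy ihz =>
      intro h
      rcases h.isUnit_or_isUnit rfl with h1 | h1
      · rw [Associates.isUnit_iff_eq_one] at h1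
        subst h1
        rw [one_mul] at h ⊢
        exact ihz h
      · rw [Associates.isUnit_iff_eq_one] at h1
        subst h1
        rw [mul_one] at h ⊢
        exact ihy h
  -- comparison of multisets supported on `S` from counts
  have hle_of : ∀ z w : Multiset (Associates H), (∀ x ∈ z, x ∈ S) →
      (∀ s : S, z.count ↑s ≤ w.count ↑s) → z ≤ w := by
    intro z w hz h
    rw [Multiset.le_iff_count]
    intro a
    by_cases ha : a ∈ S
    · exact h ⟨a, ha⟩
    · have : a ∉ z := fun hm => ha (hz a hm)
      simp [Multiset.count_eq_zero_of_notMem this]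
  by_contra hcon
  push_neg at hcon
  choose fa fz h1 fk h2 h3 using hcon
  -- a factorization of length `fk N`
  have hk : ∀ N, ∃ s : Multiset (Associates H),
      IsFactorizationOf s (fa N) ∧ s.card = fk N := fun N => (h2 N).2.1
  choose Y hY1 hY2 using hk
  -- a sequence of bounds increasing fast enough
  let g : ℕ → ℕ := fun n =>
    Nat.rec 0 (fun _ acc => acc + factorizationDist (fz acc) (Y acc) + 1) n
  have hg : ∀ n, g (n + 1) = g n + factorizationDist (fz (g n)) (Y (g n)) + 1 :=
    fun n => rfl
  have hgmono : StrictMono g := strictMono_nat_of_lt_succ (fun n => by rw [hg]; omega)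
  have hgkey : ∀ m n, m < n → factorizationDist (fz (g m)) (Y (g m)) < g n := by
    intro m n hmn
    have h4 : g (m + 1) ≤ g n := hgmono.monotone (Nat.succ_le_of_lt hmn)
    rw [hg] at h4
    omega
  -- Dickson's lemma
  let F : ℕ → ((↥S) ⊕ ((↥S) ⊕ Bool)) → ℕ := fun n => Sum.elim (fun s => (fz (g n)).count ↑s)
    (Sum.elim (fun s => (Y (g n)).count ↑s)
      (fun b => bif b then fk (g n) - (fz (g n)).card else (fz (g n)).card - fk (g n)))
  obtain ⟨m, n, hmn, hle⟩ :=
    (Set.IsPWO.pi (ι := (↥S) ⊕ ((↥S) ⊕ Bool)) (α := fun _ => ℕ) (s := fun _ => Set.univ)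
      (fun _ => Set.IsPWO.of_linearOrder Set.univ)).exists_lt (f := F)
      (fun _ => Set.mem_univ_pi.mpr (fun _ => Set.mem_univ _))
  have hle' : ∀ i, F m i ≤ F n i := fun i => hle i
  have hz1 : ∀ s : S, (fz (g m)).count ↑s ≤ (fz (g n)).count ↑s :=
    fun s => hle' (Sum.inl s)
  have hy1 : ∀ s : S, (Y (g m)).count ↑s ≤ (Y (g n)).count ↑s :=
    fun s => hle' (Sum.inr (Sum.inl s))
  have hgap1 : fk (g m) - (fz (g m)).card ≤ fk (g n) - (fz (g n)).card :=
    hle' (Sum.inr (Sum.inr true))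
  have hgap2 : (fz (g m)).card - fk (g m) ≤ (fz (g n)).card - fk (g n) :=
    hle' (Sum.inr (Sum.inr false))
  have hzle : fz (g m) ≤ fz (g n) :=
    hle_of _ _ (fun x hx => hirr x ((h1 (g m)).1 x hx)) hz1
  have hYle : Y (g m) ≤ Y (g n) :=
    hle_of _ _ (fun x hx => hirr x ((hY1 (g m)).1 x hx)) hy1
  set u : Multiset (Associates H) := fz (g n) - fz (g m) with hu
  have hzsum : fz (g m) + u = fz (g n) := by
    rw [hu, add_comm]
    exact tsub_add_cancel_of_le hzle
  set y' : Multiset (Associates H) := Y (g m) + u with hy'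
  have hfact' : IsFactorizationOf y' (fa (g n)) := by
    constructor
    · intro x hx
      rcases Multiset.mem_add.mp hx with hx | hx
      · exact (hY1 (g m)).1 x hx
      · exact (h1 (g n)).1 x (Multiset.mem_of_le (tsub_le_self) hx)
    · rw [hy', Multiset.prod_add, (hY1 (g m)).2, ← (h1 (g m)).2,
        ← Multiset.prod_add, hzsum]
      exact (h1 (g n)).2
  have hcardu : (fz (g m)).card + u.card = (fz (g n)).card := by
    rw [← Multiset.card_add, hzsum]
  have hcard' : y'.card = (Y (g m)).card + u.card := Multiset.card_add _ _
  have hc : (fz (g m)).card ≤ (fz (g n)).card := Multiset.card_le_card hzle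
  have hnem : fk (g m) ≠ (fz (g m)).card := (h2 (g m)).1
  have hnen : fk (g n) ≠ (fz (g n)).card := (h2 (g n)).1
  have hYcm : (Y (g m)).card = fk (g m) := hY2 (g m)
  -- the new factorization has length exactly `fk (g n)`
  have hmin : min (fk (g n)) ((fz (g n)).card) ≤ y'.card := by omega
  have hmax : y'.card ≤ max (fk (g n)) ((fz (g n)).card) := by omega
  have hne : y'.card ≠ (fz (g n)).card := by omega
  have hmem' : y'.card ∈ Lengths (fa (g n)) := ⟨y', hfact', rfl⟩
  have hcardk : y'.card = fk (g n) := by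
    rcases (h2 (g n)).2.2.2 y'.card hmem' hmin hmax with h | h
    · exact h
    · exact absurd h hne
  have hbad := h3 (g n) y' hfact' hcardk
  have hdist : factorizationDist (fz (g n)) y' = factorizationDist (fz (g m)) (Y (g m)) := by
    rw [hy', ← hzsum]
    exact factorizationDist_add_right _ _ _
  have := hgkey m n hmn
  omega
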